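/- Let (Ω, Σ) be a measurable space, H and K separable complex Hilbert spaces, M ∈ O_Σ(H) an observable and E ∈ C(K;H) a channel that are compatible, i.e. there exists an instrument Γ ∈ I_Σ(K;H) with Γ(X, 1_K) = M(X) for all X ∈ Σ and Γ(Ω, ·) = E. If M is extremal in O_Σ(H) or E is extremal in C(K;H), then the joint instrument Γ is unique. -/

import Mathlib

open scoped ComplexOrder ComplexInnerProductSpace Topology

noncomputable section

/-- A linear map `Φ : A → L(H)` from a `*`-algebra into the bounded operators on a complex
Hilbert space `H` is *completely positive* if for all `n`, `a₁, …, aₙ ∈ A` and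
`φ₁, …, φₙ ∈ H` one has `∑ j k, ⟪φ j, Φ (star (a j) * a k) (φ k)⟫ ≥ 0`. -/
def IsCompletelyPositive {A : Type*} [NonUnitalNonAssocSemiring A] [StarRing A] [Module ℂ A]
    {H : Type*} [NormedAddCommGroup H] [InnerProductSpace ℂ H]
    (Φ : A →ₗ[ℂ] H →L[ℂ] H) : Prop :=
  ∀ (n : ℕ) (a : Fin n → A) (v : Fin n → H),
    0 ≤ ∑ j, ∑ k, ⟪v j, Φ (star (a j) * a k) (v k)⟫

/-- The convex set `CP_P(A;H)` of completely positive maps `Φ : A → L(H)` with `Φ 1 = P`. -/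
def CPWithUnit (A : Type*) [Ring A] [StarRing A] [Algebra ℂ A]
    (H : Type*) [NormedAddCommGroup H] [InnerProductSpace ℂ H]
    (P : H →L[ℂ] H) : Set (A →ₗ[ℂ] H →L[ℂ] H) :=
  {Φ | IsCompletelyPositive Φ ∧ Φ 1 = P}

/-- `x` is an extremal point of the convex set `S`: whenever `x` is a nontrivial convex
combination of two members of `S`, they coincide. -/
def IsExtremalIn {V : Type*} [AddCommMonoid V] [Module ℂ V] (S : Set V) (x : V) : Prop :=
  x ∈ S ∧ ∀ y ∈ S, ∀ z ∈ S, ∀ t : ℝ, 0 < t → t < 1 →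
    x = (t : ℂ) • y + ((1 - t : ℝ) : ℂ) • z → y = z

/-- The σ-weak (ultraweak) topology on `L(E)`, i.e. the coarsest topology making all
functionals `T ↦ ∑' n, ⟪x n, T (y n)⟫` (with `x, y` square-summable sequences) continuous. -/
def sigmaWeakTopology (E : Type*) [NormedAddCommGroup E] [InnerProductSpace ℂ E] :
    TopologicalSpace (E →L[ℂ] E) :=
  ⨅ (x : ℕ → E) (y : ℕ → E) (_ : Summable fun n => ‖x n‖ ^ 2)
    (_ : Summable fun n => ‖y n‖ ^ 2),
    TopologicalSpace.induced (fun T : E →L[ℂ] E => ∑' n, ⟪x n, T (y n)⟫) inferInstance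

/-- A map `Φ : L(K) → L(H)` is *normal* if it is continuous with respect to the
σ-weak (ultraweak) topologies. -/
def IsNormalMap {K H : Type*} [NormedAddCommGroup K] [InnerProductSpace ℂ K]
    [NormedAddCommGroup H] [InnerProductSpace ℂ H]
    (Φ : (K →L[ℂ] K) →ₗ[ℂ] (H →L[ℂ] H)) : Prop :=
  Continuous[sigmaWeakTopology K, sigmaWeakTopology H] ⇑Φ

/-- A channel (in the Heisenberg picture) from `H` to `K` is a normal unital completely
positive map `L(K) → L(H)`. -/
def IsChannel {K H : Type*} [NormedAddCommGroup K] [InnerProductSpace ℂ K] [CompleteSpace K]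
    [NormedAddCommGroup H] [InnerProductSpace ℂ H] [CompleteSpace H]
    (Φ : (K →L[ℂ] K) →ₗ[ℂ] (H →L[ℂ] H)) : Prop :=
  IsCompletelyPositive Φ ∧ IsNormalMap Φ ∧ Φ 1 = 1

/-- The convex set `C(K;H)` of channels. -/
def ChannelSet (K H : Type*) [NormedAddCommGroup K] [InnerProductSpace ℂ K] [CompleteSpace K]
    [NormedAddCommGroup H] [InnerProductSpace ℂ H] [CompleteSpace H] :
    Set ((K →L[ℂ] K) →ₗ[ℂ] (H →L[ℂ] H)) :=
  {Φ | IsChannel Φ}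

/-- A normalized positive operator valued measure (POVM, observable) on the measurable
space `Ω` with values in `L(H)`: positive operator values, `M univ = 1`, and σ-additivity
in the weak operator topology. -/
def IsPOVM {Ω : Type*} [MeasurableSpace Ω] {H : Type*}
    [NormedAddCommGroup H] [InnerProductSpace ℂ H] [CompleteSpace H]
    (M : Set Ω → H →L[ℂ] H) : Prop :=
  (∀ X : Set Ω, MeasurableSet X → (M X).IsPositive) ∧
  M Set.univ = 1 ∧
  ∀ f : ℕ → Set Ω, (∀ n, MeasurableSet (f n)) → Pairwise (Function.onFun Disjoint f) →
    ∀ x y : H, HasSum (fun n => ⟪x, M (f n) y⟫) ⟪x, M (⋃ n, f n) y⟫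

/-- A POVM is extremal in the convex set of all POVMs on the same σ-algebra. -/
def IsExtremalPOVM {Ω : Type*} [MeasurableSpace Ω] {H : Type*}
    [NormedAddCommGroup H] [InnerProductSpace ℂ H] [CompleteSpace H]
    (M : Set Ω → H →L[ℂ] H) : Prop :=
  IsPOVM M ∧ ∀ M₁ M₂ : Set Ω → H →L[ℂ] H, IsPOVM M₁ → IsPOVM M₂ →
    ∀ t : ℝ, 0 < t → t < 1 →
    (∀ X : Set Ω, MeasurableSet X → M X = (t : ℂ) • M₁ X + ((1 - t : ℝ) : ℂ) • M₂ X) →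
    ∀ X : Set Ω, MeasurableSet X → M₁ X = M₂ X

/-- An instrument `Γ ∈ I_Σ(K;H)`: a map `Γ : Σ × L(K) → L(H)` such that each
`Γ(X, ·)` is a normal completely positive linear map, `Γ(·, B)` is an operator measure
(σ-additive in the weak operator topology) for every `B`, `Γ(·, 1)` is a POVM and
`Γ(Ω, ·)` is a channel. -/
def IsInstrument {Ω : Type*} [MeasurableSpace Ω] {K H : Type*}
    [NormedAddCommGroup K] [InnerProductSpace ℂ K] [CompleteSpace K]
    [NormedAddCommGroup H] [InnerProductSpace ℂ H] [CompleteSpace H]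
    (Γ : Set Ω → ((K →L[ℂ] K) →ₗ[ℂ] (H →L[ℂ] H))) : Prop :=
  (∀ X : Set Ω, MeasurableSet X → IsCompletelyPositive (Γ X)) ∧
  (∀ X : Set Ω, MeasurableSet X → IsNormalMap (Γ X)) ∧
  IsPOVM (fun X => Γ X 1) ∧
  (∀ (B : K →L[ℂ] K) (f : ℕ → Set Ω), (∀ n, MeasurableSet (f n)) →
    Pairwise (Function.onFun Disjoint f) → ∀ x y : H,
      HasSum (fun n => ⟪x, Γ (f n) B y⟫) ⟪x, Γ (⋃ n, f n) B y⟫) ∧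
  IsChannel (Γ Set.univ)

/-- An instrument is extremal in the convex set `I_Σ(K;H)` of all instruments. -/
def IsExtremalInstrument {Ω : Type*} [MeasurableSpace Ω] {K H : Type*}
    [NormedAddCommGroup K] [InnerProductSpace ℂ K] [CompleteSpace K]
    [NormedAddCommGroup H] [InnerProductSpace ℂ H] [CompleteSpace H]
    (Γ : Set Ω → ((K →L[ℂ] K) →ₗ[ℂ] (H →L[ℂ] H))) : Prop :=
  IsInstrument Γ ∧ ∀ Γ₁ Γ₂ : Set Ω → ((K →L[ℂ] K) →ₗ[ℂ] (H →L[ℂ] H)),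
    IsInstrument Γ₁ → IsInstrument Γ₂ → ∀ t : ℝ, 0 < t → t < 1 →
    (∀ X : Set Ω, MeasurableSet X → Γ X = (t : ℂ) • Γ₁ X + ((1 - t : ℝ) : ℂ) • Γ₂ X) →
    ∀ X : Set Ω, MeasurableSet X → Γ₁ X = Γ₂ X

/-- The observable `M` and the channel `E` are compatible with joint instrument `Γ`:
`Γ(X, 1) = M X` for all measurable `X` and `Γ(Ω, ·) = E`. -/
def IsJointInstrument {Ω : Type*} [MeasurableSpace Ω] {K H : Type*}
    [NormedAddCommGroup K] [InnerProductSpace ℂ K] [CompleteSpace K]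
    [NormedAddCommGroup H] [InnerProductSpace ℂ H] [CompleteSpace H]
    (Γ : Set Ω → ((K →L[ℂ] K) →ₗ[ℂ] (H →L[ℂ] H)))
    (M : Set Ω → H →L[ℂ] H) (E : (K →L[ℂ] K) →ₗ[ℂ] (H →L[ℂ] H)) : Prop :=
  IsInstrument Γ ∧ (∀ X : Set Ω, MeasurableSet X → Γ X 1 = M X) ∧ Γ Set.univ = E

section Helpers

variable {Ω : Type*} [MeasurableSpace Ω] {K H : Type*}
  [NormedAddCommGroup K] [InnerProductSpace ℂ K] [CompleteSpace K]
  [NormedAddCommGroup H] [InnerProductSpace ℂ H] [CompleteSpace H]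

lemma isPositive_of_inner_nonneg {T : H →L[ℂ] H} (h : ∀ x, 0 ≤ ⟪x, T x⟫) : T.IsPositive := by
  rw [ContinuousLinearMap.isPositive_iff_complex]
  intro x
  have hx := h x
  rw [Complex.nonneg_iff] at hx
  have e0 : (starRingEnd ℂ) ⟪x, T x⟫ = ⟪x, T x⟫ := Complex.conj_eq_iff_im.mpr hx.2.symm
  have e1 : ⟪T x, x⟫ = ⟪x, T x⟫ := by
    rw [← e0, inner_conj_symm]
  rw [e1]
  exact ⟨Complex.conj_eq_iff_re.mp e0, hx.1⟩

lemma inner_nonneg_of_isPositive {T : H →L[ℂ] H} (h : T.IsPositive) (x : H) :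
    0 ≤ ⟪x, T x⟫ := by
  rw [ContinuousLinearMap.isPositive_iff_complex] at h
  obtain ⟨h1, h2⟩ := h x
  have e1 : (starRingEnd ℂ) ⟪T x, x⟫ = ⟪x, T x⟫ := inner_conj_symm x (T x)
  rw [← e1, ← h1, Complex.conj_ofReal]
  exact_mod_cast h2

omit [CompleteSpace H] in
lemma cp_map_nonneg (Φ : (K →L[ℂ] K) →ₗ[ℂ] (H →L[ℂ] H)) (hΦ : IsCompletelyPositive Φ)
    {B : K →L[ℂ] K} (hB : B.IsPositive) (v : H) : 0 ≤ ⟪v, Φ B v⟫ := by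
  have hB' : (0 : K →L[ℂ] K) ≤ B := (ContinuousLinearMap.nonneg_iff_isPositive B).mpr hB
  have hsq : star (CFC.sqrt B) * CFC.sqrt B = B := by
    rw [IsSelfAdjoint.star_eq, CFC.sqrt_mul_sqrt_self B hB']
    exact IsSelfAdjoint.of_nonneg (CFC.sqrt_nonneg B)
  have := hΦ 1 (fun _ => CFC.sqrt B) (fun _ => v)
  simpa [hsq] using this

lemma cp_isPositive (Φ : (K →L[ℂ] K) →ₗ[ℂ] (H →L[ℂ] H)) (hΦ : IsCompletelyPositive Φ)
    {B : K →L[ℂ] K} (hB : B.IsPositive) : (Φ B).IsPositive :=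
  isPositive_of_inner_nonneg fun v => cp_map_nonneg Φ hΦ hB v

omit [CompleteSpace K] in
lemma one_sub_isPositive {B : H →L[ℂ] H} (hB : B.IsPositive) (hn : ‖B‖ ≤ 1) :
    ((1 : H →L[ℂ] H) - B).IsPositive := by
  apply isPositive_of_inner_nonneg
  intro x
  have h1 : ⟪x, ((1 : H →L[ℂ] H) - B) x⟫ = ⟪x, x⟫ - ⟪x, B x⟫ := by
    simp [inner_sub_right]
  have h2 := inner_nonneg_of_isPositive hB x
  rw [Complex.nonneg_iff] at h2 ⊢
  rw [h1]
  have hxx : (⟪x, x⟫ : ℂ).re = ‖x‖ * ‖x‖ := by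
    exact_mod_cast inner_self_eq_norm_mul_norm (𝕜 := ℂ) x
  constructor
  · simp only [Complex.sub_re]
    have hre : (⟪x, B x⟫ : ℂ).re ≤ ‖x‖ * ‖x‖ := by
      calc (⟪x, B x⟫ : ℂ).re ≤ ‖(⟪x, B x⟫ : ℂ)‖ := Complex.re_le_norm _
        _ ≤ ‖x‖ * ‖B x‖ := norm_inner_le_norm x (B x)
        _ ≤ ‖x‖ * (‖B‖ * ‖x‖) := by gcongr; exact B.le_opNorm x
        _ ≤ ‖x‖ * (1 * ‖x‖) := by gcongr
        _ = ‖x‖ * ‖x‖ := by ring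
    linarith
  · have him : (⟪x, x⟫ : ℂ).im = 0 := by
      exact_mod_cast inner_self_im (𝕜 := ℂ) x
    rw [Complex.sub_im, ← h2.2, him]; simp

lemma instrument_empty {Γ : Set Ω → ((K →L[ℂ] K) →ₗ[ℂ] (H →L[ℂ] H))}
    (hΓ : IsInstrument Γ) (B : K →L[ℂ] K) (x y : H) : ⟪x, Γ ∅ B y⟫ = 0 := by
  have h := hΓ.2.2.2.1 B (fun _ => ∅) (fun _ => MeasurableSet.empty)
    (fun i j _ => by simp [Function.onFun]) x y
  simp only [Set.iUnion_empty] at h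
  exact tendsto_nhds_unique tendsto_const_nhds h.summable.tendsto_atTop_zero

lemma instrument_compl {Γ : Set Ω → ((K →L[ℂ] K) →ₗ[ℂ] (H →L[ℂ] H))}
    (hΓ : IsInstrument Γ) {X : Set Ω} (hX : MeasurableSet X) (B : K →L[ℂ] K) :
    Γ X B + Γ Xᶜ B = Γ Set.univ B := by
  ext y
  apply ext_inner_left ℂ
  intro x
  set f : ℕ → Set Ω := fun n => if n = 0 then X else if n = 1 then Xᶜ else ∅ with hfdef
  have hf : ∀ n, MeasurableSet (f n) := by
    intro n
    rcases n with _ | _ | n <;> simp [f, hX, hX.compl]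
  have hd : Pairwise (Function.onFun Disjoint f) := by
    intro i j hij
    simp only [Function.onFun, f]
    rcases i with _ | _ | i <;> rcases j with _ | _ | j <;> simp_all <;>
      first
        | exact disjoint_compl_right
        | exact disjoint_compl_left
        | exact Set.disjoint_empty _
        | exact Set.empty_disjoint _
  have hU : (⋃ n, f n) = Set.univ := by
    apply Set.eq_univ_of_forall
    intro z
    by_cases hz : z ∈ X
    · exact Set.mem_iUnion.mpr ⟨0, by simpa [f] using hz⟩
    · exact Set.mem_iUnion.mpr ⟨1, by simpa [f] using hz⟩
  have h := hΓ.2.2.2.1 B f hf hd x y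
  rw [hU] at h
  have h2 : HasSum (fun n => ⟪x, Γ (f n) B y⟫) (⟪x, Γ X B y⟫ + ⟪x, Γ Xᶜ B y⟫) := by
    have h3 := hasSum_sum_of_ne_finset_zero (s := ({0, 1} : Finset ℕ))
      (f := fun n => ⟪x, Γ (f n) B y⟫) (L := SummationFilter.unconditional ℕ) ?_
    · simpa [f] using h3
    · intro n hn
      simp only [Finset.mem_insert, Finset.mem_singleton, not_or] at hn
      have : f n = ∅ := by simp [f, hn.1, hn.2]
      simpa only [this] using instrument_empty hΓ B x y
  have h4 := h2.unique h
  simpa [inner_add_right] using h4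


omit [CompleteSpace K] [CompleteSpace H] in
lemma summable_inner_clm (x y : ℕ → H) (hx : Summable fun n => ‖x n‖ ^ 2)
    (hy : Summable fun n => ‖y n‖ ^ 2) (T : H →L[ℂ] H) :
    Summable fun n => ⟪x n, T (y n)⟫ := by
  apply Summable.of_norm
  apply Summable.of_nonneg_of_le (f := fun n => (‖x n‖ ^ 2 + ‖T‖ ^ 2 * ‖y n‖ ^ 2) / 2)
    (fun n => norm_nonneg _) (fun n => ?_) (((hx.add (hy.mul_left (‖T‖ ^ 2))).div_const 2))
  have h1 : ‖⟪x n, T (y n)⟫‖ ≤ ‖x n‖ * (‖T‖ * ‖y n‖) := by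
    calc ‖⟪x n, T (y n)⟫‖ ≤ ‖x n‖ * ‖T (y n)‖ := norm_inner_le_norm _ _
      _ ≤ ‖x n‖ * (‖T‖ * ‖y n‖) := by gcongr; exact T.le_opNorm _
  nlinarith [sq_nonneg (‖x n‖ - ‖T‖ * ‖y n‖), norm_nonneg (x n), norm_nonneg (y n),
    norm_nonneg T]

omit [CompleteSpace K] [CompleteSpace H] in
lemma sigmaWeak_functional_continuous (x y : ℕ → H) (hx : Summable fun n => ‖x n‖ ^ 2)
    (hy : Summable fun n => ‖y n‖ ^ 2) :
    Continuous[sigmaWeakTopology H, inferInstance]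
      (fun T : H →L[ℂ] H => ∑' n, ⟪x n, T (y n)⟫) := by
  rw [continuous_iff_le_induced]
  unfold sigmaWeakTopology
  exact iInf_le_of_le x (iInf_le_of_le y (iInf_le_of_le hx (iInf_le_of_le hy le_rfl)))

omit [CompleteSpace K] [CompleteSpace H] in
lemma isNormalMap_add {Φ₁ Φ₂ : (K →L[ℂ] K) →ₗ[ℂ] (H →L[ℂ] H)}
    (h₁ : IsNormalMap Φ₁) (h₂ : IsNormalMap Φ₂) : IsNormalMap (Φ₁ + Φ₂) := by
  letI tK : TopologicalSpace (K →L[ℂ] K) := sigmaWeakTopology K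
  letI tH : TopologicalSpace (H →L[ℂ] H) := sigmaWeakTopology H
  have h₁' : Continuous ⇑Φ₁ := h₁
  have h₂' : Continuous ⇑Φ₂ := h₂
  show Continuous ⇑(Φ₁ + Φ₂)
  rw [continuous_iff_coinduced_le]
  show _ ≤ ⨅ (x : ℕ → H) (y : ℕ → H) (_ : Summable fun n => ‖x n‖ ^ 2)
    (_ : Summable fun n => ‖y n‖ ^ 2),
    TopologicalSpace.induced (fun T : H →L[ℂ] H => ∑' n, ⟪x n, T (y n)⟫) inferInstance
  refine le_iInf fun x => le_iInf fun y => le_iInf fun hx => le_iInf fun hy => ?_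
  rw [← continuous_iff_coinduced_le, continuous_induced_rng]
  have e : ((fun T : H →L[ℂ] H => ∑' n, ⟪x n, T (y n)⟫) ∘ ⇑(Φ₁ + Φ₂))
      = fun B => (∑' n, ⟪x n, (Φ₁ B) (y n)⟫) + ∑' n, ⟪x n, (Φ₂ B) (y n)⟫ := by
    funext B
    have := Summable.tsum_add (summable_inner_clm x y hx hy (Φ₁ B))
      (summable_inner_clm x y hx hy (Φ₂ B))
    simp only [Function.comp_apply, LinearMap.add_apply, ContinuousLinearMap.add_apply,
      inner_add_right]
    exact this
  rw [e]
  exact Continuous.add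
    ((sigmaWeak_functional_continuous x y hx hy).comp h₁')
    ((sigmaWeak_functional_continuous x y hx hy).comp h₂')

lemma cp_add {Φ₁ Φ₂ : (K →L[ℂ] K) →ₗ[ℂ] (H →L[ℂ] H)}
    (h₁ : IsCompletelyPositive Φ₁) (h₂ : IsCompletelyPositive Φ₂) :
    IsCompletelyPositive (Φ₁ + Φ₂) := by
  intro n a v
  have := add_nonneg (h₁ n a v) (h₂ n a v)
  simpa [LinearMap.add_apply, inner_add_right, Finset.sum_add_distrib] using this

lemma half_cancel {V : Type*} [AddCommGroup V] [Module ℂ V] {a b : V}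
    (h : a + a = b + b) : a = b := by
  have h2 : (2 : ℂ) • a = (2 : ℂ) • b := by rw [two_smul, two_smul]; exact h
  have h3 := congrArg (fun v => ((2 : ℂ)⁻¹) • v) h2
  simpa [smul_smul, (by norm_num : ((2 : ℂ)⁻¹ * 2) = 1)] using h3

end Helpers

set_option maxHeartbeats 1000000 in
/-- **Uniqueness of the joint instrument** (item (f) of the paper). Let `M` be an
observable and `E` a channel that are compatible, i.e. parts of a single instrument. If
`M` is extremal among POVMs or `E` is extremal among channels, then the joint instrument
is unique: any two joint instruments of `M` and `E` agree. -/
theorem joint_instrument_unique_of_extremal_marginal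
    {Ω : Type*} [MeasurableSpace Ω] {K H : Type*}
    [NormedAddCommGroup K] [InnerProductSpace ℂ K] [CompleteSpace K]
    [TopologicalSpace.SeparableSpace K]
    [NormedAddCommGroup H] [InnerProductSpace ℂ H] [CompleteSpace H]
    [TopologicalSpace.SeparableSpace H]
    (M : Set Ω → H →L[ℂ] H) (hM : IsPOVM M)
    (E : (K →L[ℂ] K) →ₗ[ℂ] (H →L[ℂ] H)) (hE : E ∈ ChannelSet K H)
    (Γ Γ' : Set Ω → ((K →L[ℂ] K) →ₗ[ℂ] (H →L[ℂ] H)))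
    (hΓ : IsJointInstrument Γ M E) (hΓ' : IsJointInstrument Γ' M E)
    (hext : IsExtremalPOVM M ∨ IsExtremalIn (ChannelSet K H) E) :
    ∀ X : Set Ω, MeasurableSet X → Γ X = Γ' X := by
  intro X hX
  obtain ⟨hΓi, hΓM, hΓE⟩ := hΓ
  obtain ⟨hΓi', hΓM', hΓE'⟩ := hΓ'
  have hE1 : E 1 = 1 := hE.2.2
  rcases hext with hMext | hEext
  · -- M extremal case
    have key : ∀ B : K →L[ℂ] K, B.IsPositive → ‖B‖ ≤ 1 → Γ X B = Γ' X B := by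
      intro B hB hn
      have h1B : ((1 : K →L[ℂ] K) - B).IsPositive := one_sub_isPositive hB hn
      have povm : ∀ (Δ Δ' : Set Ω → ((K →L[ℂ] K) →ₗ[ℂ] (H →L[ℂ] H))),
          IsInstrument Δ → IsInstrument Δ' → Δ Set.univ = E → Δ' Set.univ = E →
          IsPOVM (fun Y => Δ' Y (1 - B) + Δ Y B) := by
        intro Δ Δ' hΔ hΔ' hΔE hΔ'E
        refine ⟨?_, ?_, ?_⟩
        · intro Y hY
          exact (cp_isPositive _ (hΔ'.1 Y hY) h1B).add (cp_isPositive _ (hΔ.1 Y hY) hB)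
        · show Δ' Set.univ (1 - B) + Δ Set.univ B = 1
          rw [hΔE, hΔ'E, ← map_add,
            show (1 : K →L[ℂ] K) - B + B = 1 from by abel, hE1]
        · intro f hf hd x y
          have hs1 := hΔ'.2.2.2.1 (1 - B) f hf hd x y
          have hs2 := hΔ.2.2.2.1 B f hf hd x y
          simpa [inner_add_right, ContinuousLinearMap.add_apply] using hs1.add hs2
      have hM₁p := povm Γ Γ' hΓi hΓi' hΓE hΓE'
      have hM₂p := povm Γ' Γ hΓi' hΓi hΓE' hΓE
      have hcomb : ∀ Y : Set Ω, MeasurableSet Y →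
          M Y = ((1/2 : ℝ) : ℂ) • (Γ' Y (1 - B) + Γ Y B)
            + ((1 - 1/2 : ℝ) : ℂ) • (Γ Y (1 - B) + Γ' Y B) := by
        intro Y hY
        have a1 : Γ' Y (1 - B) + Γ' Y B = Γ' Y 1 := by
          rw [← map_add]; congr 1; abel
        have a2 : Γ Y (1 - B) + Γ Y B = Γ Y 1 := by
          rw [← map_add]; congr 1; abel
        have e1 : (Γ' Y (1 - B) + Γ Y B) + (Γ Y (1 - B) + Γ' Y B) = M Y + M Y := by
          calc (Γ' Y (1 - B) + Γ Y B) + (Γ Y (1 - B) + Γ' Y B)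
              = (Γ' Y (1 - B) + Γ' Y B) + (Γ Y (1 - B) + Γ Y B) := by abel
            _ = Γ' Y 1 + Γ Y 1 := by rw [a1, a2]
            _ = M Y + M Y := by rw [hΓM' Y hY, hΓM Y hY]
        rw [show ((1 - 1/2 : ℝ) : ℂ) = ((1/2 : ℝ) : ℂ) from by norm_num,
          ← smul_add, e1, ← two_smul ℂ (M Y), smul_smul,
          show ((1/2 : ℝ) : ℂ) * 2 = 1 from by norm_num, one_smul]
      have heq := hMext.2 (fun Y => Γ' Y (1 - B) + Γ Y B) (fun Y => Γ Y (1 - B) + Γ' Y B)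
        hM₁p hM₂p (1/2) (by norm_num) (by norm_num) hcomb X hX
      have heq' : Γ' X (1 - B) + Γ X B = Γ X (1 - B) + Γ' X B := heq
      rw [map_sub, map_sub, hΓM X hX, hΓM' X hX] at heq'
      have hq : Γ X B + Γ X B = Γ' X B + Γ' X B := by
        calc Γ X B + Γ X B
            = (M X - Γ' X B + Γ X B) + (Γ' X B + Γ X B - M X) := by abel
          _ = (M X - Γ X B + Γ' X B) + (Γ' X B + Γ X B - M X) := by rw [heq']
          _ = Γ' X B + Γ' X B := by abel
      exact half_cancel hq
    have key2 : ∀ B : K →L[ℂ] K, B.IsPositive → Γ X B = Γ' X B := by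
      intro B hB
      rcases eq_or_ne B 0 with rfl | hB0
      · simp
      · have hc : 0 < ‖B‖ := norm_pos_iff.mpr hB0
        have hB' : (((‖B‖⁻¹ : ℝ) : ℂ) • B).IsPositive := by
          apply isPositive_of_inner_nonneg
          intro v
          have h0 := inner_nonneg_of_isPositive hB v
          rw [show ⟪v, (((‖B‖⁻¹ : ℝ) : ℂ) • B) v⟫ = ((‖B‖⁻¹ : ℝ) : ℂ) * ⟪v, B v⟫ from by
            simp [inner_smul_right]]
          exact mul_nonneg (Complex.zero_le_real.mpr (by positivity)) h0
        have hn' : ‖((‖B‖⁻¹ : ℝ) : ℂ) • B‖ ≤ 1 := by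
          rw [norm_smul, show ‖(((‖B‖⁻¹ : ℝ)) : ℂ)‖ = ‖B‖⁻¹ from by
            simp [abs_of_nonneg (inv_nonneg.mpr hc.le)], inv_mul_cancel₀ hc.ne']
        have hkey := key _ hB' hn'
        have hBe : B = ((‖B‖ : ℝ) : ℂ) • (((‖B‖⁻¹ : ℝ) : ℂ) • B) := by
          rw [smul_smul, show ((‖B‖ : ℝ) : ℂ) * ((‖B‖⁻¹ : ℝ) : ℂ) = 1 from by
            push_cast; field_simp, one_smul]
        calc Γ X B = Γ X (((‖B‖ : ℝ) : ℂ) • (((‖B‖⁻¹ : ℝ) : ℂ) • B)) := by rw [← hBe]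
          _ = ((‖B‖ : ℝ) : ℂ) • Γ X (((‖B‖⁻¹ : ℝ) : ℂ) • B) := map_smul _ _ _
          _ = ((‖B‖ : ℝ) : ℂ) • Γ' X (((‖B‖⁻¹ : ℝ) : ℂ) • B) := by rw [hkey]
          _ = Γ' X B := by rw [← map_smul, ← hBe]
    have key3 : ∀ B : K →L[ℂ] K, IsSelfAdjoint B → Γ X B = Γ' X B := by
      intro B hB
      have hpos : (B + ((‖B‖ : ℝ) : ℂ) • 1).IsPositive := by
        apply isPositive_of_inner_nonneg
        intro v
        have hsym := ContinuousLinearMap.isSelfAdjoint_iff_isSymmetric.mp hB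
        have hreal : (starRingEnd ℂ) ⟪v, B v⟫ = ⟪v, B v⟫ := by
          calc (starRingEnd ℂ) ⟪v, B v⟫ = ⟪B v, v⟫ := inner_conj_symm (B v) v
            _ = ⟪v, B v⟫ := hsym v v
        have him : (⟪v, B v⟫ : ℂ).im = 0 := Complex.conj_eq_iff_im.mp hreal
        have hvv_im : (⟪v, v⟫ : ℂ).im = 0 := by
          exact_mod_cast inner_self_im (𝕜 := ℂ) v
        have hvv_re : (⟪v, v⟫ : ℂ).re = ‖v‖ * ‖v‖ := by
          exact_mod_cast inner_self_eq_norm_mul_norm (𝕜 := ℂ) v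
        have happ : ⟪v, (B + ((‖B‖ : ℝ) : ℂ) • 1) v⟫
            = ⟪v, B v⟫ + ((‖B‖ : ℝ) : ℂ) * ⟪v, v⟫ := by
          rw [ContinuousLinearMap.add_apply, inner_add_right,
            ContinuousLinearMap.smul_apply, ContinuousLinearMap.one_apply,
            inner_smul_right]
        rw [happ, Complex.nonneg_iff]
        constructor
        · have hb : -(‖B‖ * (‖v‖ * ‖v‖)) ≤ (⟪v, B v⟫ : ℂ).re := by
            have h1 : |(⟪v, B v⟫ : ℂ).re| ≤ ‖(⟪v, B v⟫ : ℂ)‖ := Complex.abs_re_le_norm _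
            have h2 : ‖(⟪v, B v⟫ : ℂ)‖ ≤ ‖v‖ * ‖B v‖ := norm_inner_le_norm _ _
            have h3 : ‖v‖ * ‖B v‖ ≤ ‖v‖ * (‖B‖ * ‖v‖) := by
              gcongr; exact B.le_opNorm v
            nlinarith [neg_abs_le ((⟪v, B v⟫ : ℂ).re)]
          have hre : (⟪v, B v⟫ + ((‖B‖ : ℝ) : ℂ) * ⟪v, v⟫).re
              = (⟪v, B v⟫ : ℂ).re + ‖B‖ * (‖v‖ * ‖v‖) := by
            rw [Complex.add_re, Complex.mul_re, hvv_im, hvv_re]; simp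
          rw [hre]
          linarith
        · have : (⟪v, B v⟫ + ((‖B‖ : ℝ) : ℂ) * ⟪v, v⟫).im = 0 := by
            rw [Complex.add_im, Complex.mul_im, him, hvv_im]; simp
          exact this.symm
      have e2 := key2 _ hpos
      calc Γ X B = Γ X (B + ((‖B‖ : ℝ) : ℂ) • 1) - ((‖B‖ : ℝ) : ℂ) • Γ X 1 := by
            rw [map_add, map_smul]; abel
        _ = Γ' X (B + ((‖B‖ : ℝ) : ℂ) • 1) - ((‖B‖ : ℝ) : ℂ) • Γ' X 1 := by
            rw [e2, hΓM X hX, hΓM' X hX]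
        _ = Γ' X B := by rw [map_add, map_smul]; abel
    refine LinearMap.ext fun B => ?_
    set S₁ : K →L[ℂ] K := ((1 : ℂ)/2) • (B + star B) with hS₁
    set S₂ : K →L[ℂ] K := (-Complex.I/2) • (B - star B) with hS₂
    have hRe : IsSelfAdjoint S₁ := by
      rw [hS₁, IsSelfAdjoint, star_smul, star_add, star_star,
        show star ((1 : ℂ)/2) = (1 : ℂ)/2 from by simp, add_comm (star B) B]
    have hIm : IsSelfAdjoint S₂ := by
      rw [hS₂]
      show star _ = _
      rw [star_smul, star_sub, star_star,
        show star (-Complex.I/2 : ℂ) = Complex.I/2 from by simp [Complex.ext_iff]]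
      module
    have hdecomp : B = S₁ + Complex.I • S₂ := by
      rw [hS₁, hS₂, smul_smul, show Complex.I * (-Complex.I/2) = (1 : ℂ)/2 from by
        rw [← mul_div_assoc, mul_neg, Complex.I_mul_I]; norm_num]
      module
    calc Γ X B = Γ X (S₁ + Complex.I • S₂) := by rw [← hdecomp]
      _ = Γ X S₁ + Complex.I • Γ X S₂ := by
            rw [map_add, map_smul (Γ X) Complex.I S₂]
      _ = Γ' X S₁ + Complex.I • Γ' X S₂ := by rw [key3 _ hRe, key3 _ hIm]
      _ = Γ' X (S₁ + Complex.I • S₂) := by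
            rw [map_add, map_smul (Γ' X) Complex.I S₂]
      _ = Γ' X B := by rw [← hdecomp]
  · -- E extremal case
    have hcΓ : Γ X + Γ Xᶜ = Γ Set.univ := LinearMap.ext fun B => instrument_compl hΓi hX B
    have hcΓ' : Γ' X + Γ' Xᶜ = Γ' Set.univ :=
      LinearMap.ext fun B => instrument_compl hΓi' hX B
    have hMcompl : M X + M Xᶜ = 1 := by
      have h1 := instrument_compl hΓi hX (1 : K →L[ℂ] K)
      rw [hΓM X hX, hΓM Xᶜ hX.compl, hΓE] at h1
      rw [h1, hE1]
    have hchan : ∀ (Δ Δ' : Set Ω → ((K →L[ℂ] K) →ₗ[ℂ] (H →L[ℂ] H))),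
        IsInstrument Δ → IsInstrument Δ' →
        (∀ Y : Set Ω, MeasurableSet Y → Δ Y 1 = M Y) →
        (∀ Y : Set Ω, MeasurableSet Y → Δ' Y 1 = M Y) →
        (Δ X + Δ' Xᶜ) ∈ ChannelSet K H := by
      intro Δ Δ' hΔ hΔ' hΔM hΔ'M
      refine ⟨cp_add (hΔ.1 X hX) (hΔ'.1 Xᶜ hX.compl),
        isNormalMap_add (hΔ.2.1 X hX) (hΔ'.2.1 Xᶜ hX.compl), ?_⟩
      show Δ X 1 + Δ' Xᶜ 1 = 1
      rw [hΔM X hX, hΔ'M Xᶜ hX.compl, hMcompl]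
    have hE₁ := hchan Γ Γ' hΓi hΓi' hΓM hΓM'
    have hE₂ := hchan Γ' Γ hΓi' hΓi hΓM' hΓM
    have hsum : (Γ X + Γ' Xᶜ) + (Γ' X + Γ Xᶜ) = E + E := by
      calc (Γ X + Γ' Xᶜ) + (Γ' X + Γ Xᶜ)
          = (Γ X + Γ Xᶜ) + (Γ' X + Γ' Xᶜ) := by abel
        _ = E + E := by rw [hcΓ, hcΓ', hΓE, hΓE']
    have hconv : E = ((1/2 : ℝ) : ℂ) • (Γ X + Γ' Xᶜ)
        + ((1 - 1/2 : ℝ) : ℂ) • (Γ' X + Γ Xᶜ) := by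
      rw [show ((1 - 1/2 : ℝ) : ℂ) = ((1/2 : ℝ) : ℂ) from by norm_num,
        ← smul_add, hsum, ← two_smul ℂ E, smul_smul,
        show ((1/2 : ℝ) : ℂ) * 2 = 1 from by norm_num, one_smul]
    have heq := hEext.2 _ hE₁ _ hE₂ (1/2) (by norm_num) (by norm_num) hconv
    have huniv : Γ X + Γ Xᶜ = Γ' X + Γ' Xᶜ := by rw [hcΓ, hcΓ', hΓE, hΓE']
    have hq : Γ X + Γ X = Γ' X + Γ' X := by
      calc Γ X + Γ X
          = (Γ X + Γ' Xᶜ) + (Γ X + Γ Xᶜ) - (Γ Xᶜ + Γ' Xᶜ) := by abel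
        _ = (Γ' X + Γ Xᶜ) + (Γ' X + Γ' Xᶜ) - (Γ Xᶜ + Γ' Xᶜ) := by rw [heq, huniv]
        _ = Γ' X + Γ' X := by abel
    exact half_cancel hq
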